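/- Let ω = Σ_i ω̃_i δx^i + Σ_i ω_i δy^i be a 1-form on E (with smooth coefficients ω̃_i, ω_i; note i_Sω = 0). Then ω is a dual symmetry of S, i.e., L_Sω = 0, if and only if ω̃_i = −(∇ω)_i for all i and the Jacobi equation (∇(∇ω))_i + Σ_j R^j_i ω_j = 0 holds for all i. -/

import Mathlib

noncomputable section

/-- The local model `E = ℝ × (Fin n → ℝ) × (Fin n → ℝ)` of the first jet bundle `J¹π`,
with coordinates `(t, xⁱ, yⁱ)`.  Tangent vectors at a point are identified with
elements of `E n` itself. -/
abbrev E (n : ℕ) : Type := ℝ × (Fin n → ℝ) × (Fin n → ℝ)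

variable {n : ℕ}

/-- A map between normed spaces is `C^∞`-smooth. -/
def Cinf {α β : Type*} [NormedAddCommGroup α] [NormedSpace ℝ α]
    [NormedAddCommGroup β] [NormedSpace ℝ β] (f : α → β) : Prop :=
  ContDiff ℝ (⊤ : ℕ∞) f

/-- A tangent vector having only a `y`-component. -/
def ypart (w : Fin n → ℝ) : E n := (0, 0, w)

/-- The coordinate vector `∂/∂yⁱ`. -/
def pdy (i : Fin n) : E n := ypart (Pi.single i 1)

/-- The coordinate vector `∂/∂xⁱ`. -/
def pdx (i : Fin n) : E n := (0, Pi.single i 1, 0)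

/-- Action of a vector field `X` on a function `f`: `X(f)(p) = df_p(X(p))`. -/
def vfd (X : E n → E n) (f : E n → ℝ) : E n → ℝ := fun p => fderiv ℝ f p (X p)

/-- Lie bracket of vector fields on `E n`. -/
def lieb (X Y : E n → E n) : E n → E n :=
  fun p => fderiv ℝ Y p (X p) - fderiv ℝ X p (Y p)

/-- The semispray `S = ∂/∂t + Σ yⁱ ∂/∂xⁱ − 2 Σ Gⁱ ∂/∂yⁱ` associated to `G`. -/
def Ssp (G : E n → Fin n → ℝ) : E n → E n := fun p => (1, p.2.2, fun i => -(2 * G p i))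

/-- Nonlinear connection coefficients `Nⁱⱼ = ∂Gⁱ/∂yʲ`. -/
def Nc (G : E n → Fin n → ℝ) (i j : Fin n) : E n → ℝ :=
  fun p => fderiv ℝ (fun q => G q i) p (pdy j)

/-- `Nⁱ₀ = 2Gⁱ − Σⱼ Nⁱⱼ yʲ`. -/
def N0c (G : E n → Fin n → ℝ) (i : Fin n) : E n → ℝ :=
  fun p => 2 * G p i - ∑ j, Nc G i j p * p.2.2 j

/-- The horizontal vector field `δ/δxⁱ = ∂/∂xⁱ − Σⱼ Nʲᵢ ∂/∂yʲ`. -/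
def ddx (G : E n → Fin n → ℝ) (i : Fin n) : E n → E n :=
  fun p => (0, Pi.single i 1, fun j => -(Nc G j i p))

/-- The contact 1-form `δxⁱ = dxⁱ − yⁱ dt`. -/
def dxi (i : Fin n) : E n → E n → ℝ := fun p w => w.2.1 i - p.2.2 i * w.1

/-- The 1-form `δyⁱ = dyⁱ + Σⱼ Nⁱⱼ dxʲ + Nⁱ₀ dt`. -/
def dyi (G : E n → Fin n → ℝ) (i : Fin n) : E n → E n → ℝ :=
  fun p w => w.2.2 i + (∑ j, Nc G i j p * w.2.1 j) + N0c G i p * w.1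

/-- The vertical endomorphism `J = Σᵢ ∂/∂yⁱ ⊗ δxⁱ`. -/
def Jv : E n → E n → E n := fun p w => ypart (fun i => dxi i p w)

/-- The horizontal projector `h = S ⊗ dt + Σᵢ δ/δxⁱ ⊗ δxⁱ`. -/
def hv (G : E n → Fin n → ℝ) : E n → E n → E n :=
  fun p w => w.1 • Ssp G p + ∑ i, dxi i p w • ddx G i p

/-- Jacobi endomorphism components `Rⁱⱼ = 2 ∂Gⁱ/∂xʲ − Σₖ Nⁱₖ Nᵏⱼ − S(Nⁱⱼ)`. -/
def Rjac (G : E n → Fin n → ℝ) (i j : Fin n) : E n → ℝ := fun p =>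
  2 * fderiv ℝ (fun q => G q i) p (pdx j) - (∑ k, Nc G i k p * Nc G k j p)
    - vfd (Ssp G) (Nc G i j) p

/-- Curvature components `Rⁱⱼₖ = (δ/δxᵏ)(Nⁱⱼ) − (δ/δxʲ)(Nⁱₖ)`. -/
def Rcur (G : E n → Fin n → ℝ) (i j k : Fin n) : E n → ℝ := fun p =>
  fderiv ℝ (Nc G i j) p (ddx G k p) - fderiv ℝ (Nc G i k) p (ddx G j p)

/-- The Jacobi endomorphism `Φ = Σᵢⱼ Rʲᵢ ∂/∂yʲ ⊗ δxⁱ`. -/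
def Phi (G : E n → Fin n → ℝ) : E n → E n → E n :=
  fun p w => ypart (fun j => ∑ i, Rjac G j i p * dxi i p w)

/-- The tensor `Ψ = Σᵢ δ/δxⁱ ⊗ δyⁱ − Σᵢⱼ Rʲᵢ ∂/∂yʲ ⊗ δxⁱ`. -/
def Psi (G : E n → Fin n → ℝ) : E n → E n → E n :=
  fun p w => (∑ i, dyi G i p w • ddx G i p) - Phi G p w

/-- Lie derivative of a 1-form `θ` along `X`, evaluated on a vector field `Y`:
`(L_Xθ)(Y) = X(θ(Y)) − θ([X,Y])`. -/
def lieD (X : E n → E n) (θ : E n → E n → ℝ) (Y : E n → E n) : E n → ℝ :=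
  fun p => fderiv ℝ (fun q => θ q (Y q)) p (X p) - θ p (lieb X Y p)

/-- Exterior derivative of a 1-form: `dθ(X,Y) = X(θ(Y)) − Y(θ(X)) − θ([X,Y])`. -/
def extD (θ : E n → E n → ℝ) (X Y : E n → E n) : E n → ℝ :=
  fun p => fderiv ℝ (fun q => θ q (Y q)) p (X p) - fderiv ℝ (fun q => θ q (X q)) p (Y p)
    - θ p (lieb X Y p)

/-- Exterior derivative of a 1-form given as an operator on vector fields. -/
def extDop (α : (E n → E n) → E n → ℝ) (X Y : E n → E n) : E n → ℝ :=
  fun p => fderiv ℝ (α Y) p (X p) - fderiv ℝ (α X) p (Y p) - α (lieb X Y) p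

/-- The semi-basic 1-form `θ₀ dt + Σᵢ θᵢ δxⁱ`. -/
def sbform (θ0 : E n → ℝ) (θc : Fin n → E n → ℝ) : E n → E n → ℝ :=
  fun p w => θ0 p * w.1 + ∑ i, θc i p * dxi i p w

/-- `d_Jθ(X,Y) = dθ(JX,Y) + dθ(X,JY)` for a semi-basic 1-form `θ`. -/
def dJf (θ : E n → E n → ℝ) (X Y : E n → E n) : E n → ℝ :=
  fun p => extD θ (fun q => Jv q (X q)) Y p + extD θ X (fun q => Jv q (Y q)) p

/-- `d_hθ(X,Y) = dθ(hX,Y) + dθ(X,hY) − dθ(X,Y)` for a semi-basic 1-form `θ`. -/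
def dhf (G : E n → Fin n → ℝ) (θ : E n → E n → ℝ) (X Y : E n → E n) : E n → ℝ :=
  fun p => extD θ (fun q => hv G q (X q)) Y p + extD θ X (fun q => hv G q (Y q)) p
    - extD θ X Y p

/-- `d_Φθ(X,Y) = dθ(ΦX,Y) + dθ(X,ΦY)` for a semi-basic 1-form `θ`. -/
def dPhif (G : E n → Fin n → ℝ) (θ : E n → E n → ℝ) (X Y : E n → E n) : E n → ℝ :=
  fun p => extD θ (fun q => Phi G q (X q)) Y p + extD θ X (fun q => Phi G q (Y q)) p

/-- Lie derivative of the 2-form `dθ` along a vector field `SS`: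
`(L_S dθ)(X,Y) = S(dθ(X,Y)) − dθ([S,X],Y) − dθ(X,[S,Y])`. -/
def lieD2 (SS : E n → E n) (θ : E n → E n → ℝ) (X Y : E n → E n) : E n → ℝ :=
  fun p => fderiv ℝ (extD θ X Y) p (SS p) - extD θ (lieb SS X) Y p - extD θ X (lieb SS Y) p

/-- `∇dθ = L_S(dθ) − i_Ψ(dθ)`. -/
def nabD (G : E n → Fin n → ℝ) (θ : E n → E n → ℝ) (X Y : E n → E n) : E n → ℝ :=
  fun p => lieD2 (Ssp G) θ X Y p
    - (extD θ (fun q => Psi G q (X q)) Y p + extD θ X (fun q => Psi G q (Y q)) p)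

/-- The dynamical covariant derivative of an `n`-tuple of functions:
`(∇f)ᵢ = S(fᵢ) − Σⱼ Nʲᵢ fⱼ`. -/
def covd (G : E n → Fin n → ℝ) (f : Fin n → E n → ℝ) : Fin n → E n → ℝ :=
  fun i p => vfd (Ssp G) (f i) p - ∑ j, Nc G j i p * f j p


section Stmt9Aux

variable {n : ℕ}

lemma Cinf.diff {α β : Type*} [NormedAddCommGroup α] [NormedSpace ℝ α]
    [NormedAddCommGroup β] [NormedSpace ℝ β] {f : α → β} (h : Cinf f) :
    Differentiable ℝ f := h.differentiable (by simp)

/-- projection `dt` as a CLM -/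
def pit : E n →L[ℝ] ℝ := ContinuousLinearMap.fst ℝ ℝ ((Fin n → ℝ) × (Fin n → ℝ))

/-- projection `dxⁱ` as a CLM -/
def pix (i : Fin n) : E n →L[ℝ] ℝ :=
  (ContinuousLinearMap.proj i).comp ((ContinuousLinearMap.fst ℝ (Fin n → ℝ) (Fin n → ℝ)).comp
    (ContinuousLinearMap.snd ℝ ℝ ((Fin n → ℝ) × (Fin n → ℝ))))

/-- projection `dyⁱ` as a CLM -/
def piy (i : Fin n) : E n →L[ℝ] ℝ :=
  (ContinuousLinearMap.proj i).comp ((ContinuousLinearMap.snd ℝ (Fin n → ℝ) (Fin n → ℝ)).comp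
    (ContinuousLinearMap.snd ℝ ℝ ((Fin n → ℝ) × (Fin n → ℝ))))

@[simp] lemma pit_apply (w : E n) : pit w = w.1 := rfl
@[simp] lemma pix_apply (i : Fin n) (w : E n) : pix i w = w.2.1 i := rfl
@[simp] lemma piy_apply (i : Fin n) (w : E n) : piy i w = w.2.2 i := rfl

/-- the 1-form `ω` as a CLM-valued map -/
def Th (G : E n → Fin n → ℝ) (ωt ωc : Fin n → E n → ℝ) : E n → E n →L[ℝ] ℝ := fun q =>
  (∑ i, ωt i q • (pix i - q.2.2 i • pit)) +
  ∑ i, ωc i q • ((piy i + ∑ j, Nc G i j q • pix j) + N0c G i q • pit)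

lemma Th_apply (G : E n → Fin n → ℝ) (ωt ωc : Fin n → E n → ℝ) (q w : E n) :
    Th G ωt ωc q w = (∑ i, ωt i q * dxi i q w) + ∑ i, ωc i q * dyi G i q w := by
  simp only [Th, ContinuousLinearMap.add_apply, ContinuousLinearMap.sum_apply,
    ContinuousLinearMap.smul_apply, ContinuousLinearMap.sub_apply, smul_eq_mul,
    pit_apply, pix_apply, piy_apply, dxi, dyi]

lemma cinf_Gi {G : E n → Fin n → ℝ} (hG : Cinf G) (i : Fin n) :
    Cinf (fun q => G q i) :=
  (ContinuousLinearMap.proj (R := ℝ) (φ := fun _ : Fin n => ℝ) i).contDiff.comp hG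

lemma cinf_fdapply {f : E n → ℝ} (hf : Cinf f) {V : E n → E n} (hV : Cinf V) :
    Cinf (fun q => fderiv ℝ f q (V q)) :=
  ContDiff.clm_apply (contDiff_infty_iff_fderiv.mp hf).2 hV

lemma cinf_y (i : Fin n) : Cinf (fun q : E n => q.2.2 i) :=
  (ContinuousLinearMap.proj (R := ℝ) (φ := fun _ : Fin n => ℝ) i).contDiff.comp
    (contDiff_snd.comp contDiff_snd)

lemma cinf_Ssp {G : E n → Fin n → ℝ} (hG : Cinf G) : Cinf (Ssp G) :=
  contDiff_const.prodMk ((contDiff_snd.comp contDiff_snd).prodMk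
    (contDiff_pi.mpr fun i => (contDiff_const.mul (cinf_Gi hG i)).neg))

lemma cinf_Nc {G : E n → Fin n → ℝ} (hG : Cinf G) (i j : Fin n) : Cinf (Nc G i j) :=
  cinf_fdapply (cinf_Gi hG i) contDiff_const

lemma cinf_N0c {G : E n → Fin n → ℝ} (hG : Cinf G) (i : Fin n) : Cinf (N0c G i) :=
  (contDiff_const.mul (cinf_Gi hG i)).sub
    (ContDiff.sum fun j _ => (cinf_Nc hG i j).mul (cinf_y j))

lemma cinf_vfdS {G : E n → Fin n → ℝ} (hG : Cinf G) {f : E n → ℝ} (hf : Cinf f) :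
    Cinf (vfd (Ssp G) f) :=
  cinf_fdapply hf (cinf_Ssp hG)

lemma cinf_covd {G : E n → Fin n → ℝ} (hG : Cinf G) {f : Fin n → E n → ℝ}
    (hf : ∀ i, Cinf (f i)) (i : Fin n) : Cinf (covd G f i) :=
  (cinf_vfdS hG (hf i)).sub (ContDiff.sum fun j _ => (cinf_Nc hG j i).mul (hf j))

lemma cinf_Th {G : E n → Fin n → ℝ} (hG : Cinf G) {ωt ωc : Fin n → E n → ℝ}
    (hωt : ∀ i, Cinf (ωt i)) (hωc : ∀ i, Cinf (ωc i)) : Cinf (Th G ωt ωc) := by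
  refine ContDiff.add (ContDiff.sum fun i _ => ContDiff.smul (hωt i) ?_)
    (ContDiff.sum fun i _ => ContDiff.smul (hωc i) ?_)
  · exact contDiff_const.sub (ContDiff.smul (cinf_y i) contDiff_const)
  · exact (contDiff_const.add (ContDiff.sum fun j _ =>
      ContDiff.smul (cinf_Nc hG i j) contDiff_const)).add
      (ContDiff.smul (cinf_N0c hG i) contDiff_const)

/-- value form of the product rule -/
lemma fd_mul {f g : E n → ℝ} {p : E n} (hf : DifferentiableAt ℝ f p)
    (hg : DifferentiableAt ℝ g p) (v : E n) :
    fderiv ℝ (fun q => f q * g q) p v = fderiv ℝ f p v * g p + f p * fderiv ℝ g p v := by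
  rw [fderiv_fun_mul hf hg]; simp; ring

lemma fd_sum {f : Fin n → E n → ℝ} {p : E n} (hf : ∀ i, DifferentiableAt ℝ (f i) p) (v : E n) :
    fderiv ℝ (fun q => ∑ i, f i q) p v = ∑ i, fderiv ℝ (f i) p v := by
  rw [fderiv_fun_sum fun i _ => hf i]; simp

lemma fd_add {f g : E n → ℝ} {p : E n} (hf : DifferentiableAt ℝ f p)
    (hg : DifferentiableAt ℝ g p) (v : E n) :
    fderiv ℝ (fun q => f q + g q) p v = fderiv ℝ f p v + fderiv ℝ g p v := by
  rw [fderiv_fun_add hf hg]; simp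

lemma fd_sub {f g : E n → ℝ} {p : E n} (hf : DifferentiableAt ℝ f p)
    (hg : DifferentiableAt ℝ g p) (v : E n) :
    fderiv ℝ (fun q => f q - g q) p v = fderiv ℝ f p v - fderiv ℝ g p v := by
  rw [fderiv_fun_sub hf hg]; simp

/-- derivative of the semispray -/
lemma fd_Ssp {G : E n → Fin n → ℝ} (hG : Cinf G) (p v : E n) :
    fderiv ℝ (Ssp G) p v
      = (0, v.2.2, fun i => -(2 * fderiv ℝ (fun q => G q i) p v)) := by
  have hcomp : ∀ i : Fin n, HasFDerivAt (fun q : E n => -(2 * G q i))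
      (-((2:ℝ) • fderiv ℝ (fun q => G q i) p)) p := fun i =>
    ((((cinf_Gi hG i).diff p).hasFDerivAt).const_mul (2:ℝ)).neg
  have hpi : HasFDerivAt (fun q : E n => fun i => -(2 * G q i))
      (ContinuousLinearMap.pi fun i => -((2:ℝ) • fderiv ℝ (fun q => G q i) p)) p :=
    hasFDerivAt_pi.mpr hcomp
  have hy : HasFDerivAt (fun q : E n => q.2.2)
      ((ContinuousLinearMap.snd ℝ (Fin n → ℝ) (Fin n → ℝ)).comp
        (ContinuousLinearMap.snd ℝ ℝ ((Fin n → ℝ) × (Fin n → ℝ)))) p :=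
    ((ContinuousLinearMap.snd ℝ (Fin n → ℝ) (Fin n → ℝ)).comp
        (ContinuousLinearMap.snd ℝ ℝ ((Fin n → ℝ) × (Fin n → ℝ)))).hasFDerivAt
  have h1 : HasFDerivAt (fun _ : E n => (1:ℝ)) (0 : E n →L[ℝ] ℝ) p := hasFDerivAt_const 1 p
  have hS : HasFDerivAt (Ssp G)
      ((0 : E n →L[ℝ] ℝ).prod (((ContinuousLinearMap.snd ℝ (Fin n → ℝ) (Fin n → ℝ)).comp
        (ContinuousLinearMap.snd ℝ ℝ ((Fin n → ℝ) × (Fin n → ℝ)))).prod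
        (ContinuousLinearMap.pi fun i => -((2:ℝ) • fderiv ℝ (fun q => G q i) p)))) p :=
    HasFDerivAt.prodMk h1 (HasFDerivAt.prodMk hy hpi)
  rw [hS.fderiv]
  simp only [ContinuousLinearMap.prod_apply, ContinuousLinearMap.zero_apply,
    ContinuousLinearMap.coe_comp', Function.comp_apply, ContinuousLinearMap.coe_snd',
    ContinuousLinearMap.pi_apply, ContinuousLinearMap.neg_apply,
    ContinuousLinearMap.smul_apply, smul_eq_mul]
  rfl

lemma diffAt_Ssp {G : E n → Fin n → ℝ} (hG : Cinf G) (p : E n) :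
    DifferentiableAt ℝ (Ssp G) p :=
  (cinf_Ssp hG).diff p

/-- evaluation commutes with fderiv for CLM-valued maps -/
lemma fd_clm_eval {Θ : E n → E n →L[ℝ] ℝ} {p : E n} (hΘ : DifferentiableAt ℝ Θ p)
    (s v : E n) : fderiv ℝ Θ p s v = fderiv ℝ (fun q => Θ q v) p s := by
  rw [fderiv_clm_apply hΘ (differentiableAt_const v)]
  simp

/-- tensoriality of the Lie derivative -/
lemma lieD_eq {G : E n → Fin n → ℝ} (hG : Cinf G) {ωt ωc : Fin n → E n → ℝ}
    (hωt : ∀ i, Cinf (ωt i)) (hωc : ∀ i, Cinf (ωc i)) {X : E n → E n} (hX : Cinf X)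
    (p : E n) :
    lieD (Ssp G)
        (fun q w => (∑ i, ωt i q * dxi i q w) + ∑ i, ωc i q * dyi G i q w) X p
      = fderiv ℝ (Th G ωt ωc) p (Ssp G p) (X p)
        + Th G ωt ωc p (fderiv ℝ (Ssp G) p (X p)) := by
  have hΘ : DifferentiableAt ℝ (Th G ωt ωc) p :=
    (cinf_Th hG hωt hωc).diff p
  have hXd : DifferentiableAt ℝ X p := Cinf.diff hX p
  have hfun : (fun q => (∑ i, ωt i q * dxi i q (X q)) + ∑ i, ωc i q * dyi G i q (X q))
      = fun q => Th G ωt ωc q (X q) := funext fun q => (Th_apply G ωt ωc q (X q)).symm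
  show fderiv ℝ (fun q => (∑ i, ωt i q * dxi i q (X q)) + ∑ i, ωc i q * dyi G i q (X q)) p
        (Ssp G p) - ((∑ i, ωt i p * dxi i p (lieb (Ssp G) X p))
          + ∑ i, ωc i p * dyi G i p (lieb (Ssp G) X p)) = _
  rw [hfun, fderiv_clm_apply hΘ hXd, ← Th_apply G ωt ωc p (lieb (Ssp G) X p)]
  simp only [lieb, ContinuousLinearMap.add_apply, ContinuousLinearMap.flip_apply,
    ContinuousLinearMap.comp_apply, map_sub]
  try ring

lemma Th_S (G : E n → Fin n → ℝ) (ωt ωc : Fin n → E n → ℝ) (p : E n) :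
    Th G ωt ωc p (Ssp G p) = 0 := by
  rw [Th_apply]
  have h1 : ∀ i, dxi i p (Ssp G p) = 0 := fun i => by simp [dxi, Ssp]
  have h2 : ∀ i, dyi G i p (Ssp G p) = 0 := fun i => by simp [dyi, Ssp, N0c]
  simp [h1, h2]

lemma Th_pdy (G : E n → Fin n → ℝ) (ωt ωc : Fin n → E n → ℝ) (k : Fin n) :
    (fun q => Th G ωt ωc q (pdy k)) = ωc k := by
  funext q
  rw [Th_apply]
  have h1 : ∀ i, dxi i q (pdy k) = 0 := fun i => by simp [dxi, pdy, ypart]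
  have h2 : ∀ i, dyi G i q (pdy k) = (Pi.single k 1 : Fin n → ℝ) i := fun i => by
    simp [dyi, pdy, ypart]
  simp [h1, h2, Pi.single_apply]

lemma Th_pdx (G : E n → Fin n → ℝ) (ωt ωc : Fin n → E n → ℝ) (k : Fin n) :
    (fun q => Th G ωt ωc q (pdx k)) = fun q => ωt k q + ∑ i, ωc i q * Nc G i k q := by
  funext q
  rw [Th_apply]
  have h1 : ∀ i, dxi i q (pdx k) = (Pi.single k 1 : Fin n → ℝ) i := fun i => by
    simp [dxi, pdx]
  have h2 : ∀ i, dyi G i q (pdx k) = Nc G i k q := fun i => by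
    simp [dyi, pdx, Pi.single_apply]
  simp [h1, h2, Pi.single_apply]

/-- value of `A` on `S` is zero -/
lemma A_S {G : E n → Fin n → ℝ} (hG : Cinf G) {ωt ωc : Fin n → E n → ℝ}
    (hωt : ∀ i, Cinf (ωt i)) (hωc : ∀ i, Cinf (ωc i)) (p : E n) :
    fderiv ℝ (Th G ωt ωc) p (Ssp G p) (Ssp G p)
      + Th G ωt ωc p (fderiv ℝ (Ssp G) p (Ssp G p)) = 0 := by
  have hΘ : DifferentiableAt ℝ (Th G ωt ωc) p :=
    (cinf_Th hG hωt hωc).diff p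
  have hSd : DifferentiableAt ℝ (Ssp G) p := diffAt_Ssp hG p
  have h0 : (fun q => Th G ωt ωc q (Ssp G q)) = fun _ => (0:ℝ) :=
    funext fun q => Th_S G ωt ωc q
  have hd : fderiv ℝ (fun q => Th G ωt ωc q (Ssp G q)) p = 0 := by
    rw [h0]; exact fderiv_const_apply 0
  rw [fderiv_clm_apply hΘ hSd] at hd
  have h2 := congrArg (fun (L : E n →L[ℝ] ℝ) => L (Ssp G p)) hd
  simp only [ContinuousLinearMap.add_apply, ContinuousLinearMap.flip_apply,
    ContinuousLinearMap.comp_apply, ContinuousLinearMap.zero_apply] at h2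
  linarith

/-- value of `A` on `∂/∂yᵏ` -/
lemma A_pdy {G : E n → Fin n → ℝ} (hG : Cinf G) {ωt ωc : Fin n → E n → ℝ}
    (hωt : ∀ i, Cinf (ωt i)) (hωc : ∀ i, Cinf (ωc i)) (k : Fin n) (p : E n) :
    fderiv ℝ (Th G ωt ωc) p (Ssp G p) (pdy k)
      + Th G ωt ωc p (fderiv ℝ (Ssp G) p (pdy k))
      = ωt k p + covd G ωc k p := by
  have hΘ : DifferentiableAt ℝ (Th G ωt ωc) p :=
    (cinf_Th hG hωt hωc).diff p
  rw [fd_clm_eval hΘ, Th_pdy G ωt ωc k, fd_Ssp hG]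
  have hval : Th G ωt ωc p
      ((0, (pdy k).2.2, fun i => -(2 * fderiv ℝ (fun q => G q i) p (pdy k))) : E n)
      = ωt k p - ∑ i, Nc G i k p * ωc i p := by
    rw [Th_apply]
    have h1 : ∀ i, dxi i p ((0, (pdy k).2.2,
        fun i => -(2 * fderiv ℝ (fun q => G q i) p (pdy k))) : E n)
        = (Pi.single k 1 : Fin n → ℝ) i := fun i => by simp [dxi, pdy, ypart]
    have h2 : ∀ i, dyi G i p ((0, (pdy k).2.2,
        fun i => -(2 * fderiv ℝ (fun q => G q i) p (pdy k))) : E n)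
        = -(2 * Nc G i k p) + Nc G i k p := fun i => by
      simp [dyi, pdy, ypart, Nc, Pi.single_apply]
    simp only [h1, h2]
    have h3 : ∑ i, ωc i p * (-(2 * Nc G i k p) + Nc G i k p)
        = -∑ i, Nc G i k p * ωc i p := by
      rw [← Finset.sum_neg_distrib]
      exact Finset.sum_congr rfl fun i _ => by ring
    rw [h3]
    simp [Pi.single_apply]
    ring
  rw [hval]
  show vfd (Ssp G) (ωc k) p + _ = _
  rw [covd]
  ring

/-- value of `A` on `∂/∂xᵏ` -/
lemma A_pdx {G : E n → Fin n → ℝ} (hG : Cinf G) {ωt ωc : Fin n → E n → ℝ}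
    (hωt : ∀ i, Cinf (ωt i)) (hωc : ∀ i, Cinf (ωc i)) (k : Fin n) (p : E n) :
    fderiv ℝ (Th G ωt ωc) p (Ssp G p) (pdx k)
      + Th G ωt ωc p (fderiv ℝ (Ssp G) p (pdx k))
      = vfd (Ssp G) (fun q => ωt k q + covd G ωc k q) p
        - (covd G (covd G ωc) k p + ∑ j, Rjac G j k p * ωc j p) := by
  have hΘ : DifferentiableAt ℝ (Th G ωt ωc) p :=
    (cinf_Th hG hωt hωc).diff p
  have dωt : ∀ i, DifferentiableAt ℝ (ωt i) p :=
    fun i => (hωt i).diff p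
  have dωc : ∀ i, DifferentiableAt ℝ (ωc i) p :=
    fun i => (hωc i).diff p
  have dN : ∀ i j, DifferentiableAt ℝ (Nc G i j) p :=
    fun i j => (cinf_Nc hG i j).diff p
  have dQ : DifferentiableAt ℝ (vfd (Ssp G) (ωc k)) p :=
    (cinf_vfdS hG (hωc k)).diff p
  have dcov : ∀ i, DifferentiableAt ℝ (covd G ωc i) p :=
    fun i => (cinf_covd hG hωc i).diff p
  -- LHS term 1
  have hT1 : fderiv ℝ (Th G ωt ωc) p (Ssp G p) (pdx k)
      = vfd (Ssp G) (ωt k) p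
        + ∑ i, (vfd (Ssp G) (ωc i) p * Nc G i k p + ωc i p * vfd (Ssp G) (Nc G i k) p) := by
    rw [fd_clm_eval hΘ, Th_pdx G ωt ωc k,
      fd_add (dωt k) (DifferentiableAt.fun_sum fun i _ => (dωc i).fun_mul (dN i k)),
      fd_sum (fun i => (dωc i).fun_mul (dN i k))]
    exact congrArg _ (Finset.sum_congr rfl fun i _ => fd_mul (dωc i) (dN i k) _)
  -- LHS term 2
  have hT2 : Th G ωt ωc p (fderiv ℝ (Ssp G) p (pdx k))
      = ∑ i, ωc i p * (-(2 * fderiv ℝ (fun q => G q i) p (pdx k))) := by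
    rw [fd_Ssp hG, Th_apply]
    have h1 : ∀ i, dxi i p ((0, (pdx k).2.2,
        fun i => -(2 * fderiv ℝ (fun q => G q i) p (pdx k))) : E n) = 0 := fun i => by
      simp [dxi, pdx]
    have h2 : ∀ i, dyi G i p ((0, (pdx k).2.2,
        fun i => -(2 * fderiv ℝ (fun q => G q i) p (pdx k))) : E n)
        = -(2 * fderiv ℝ (fun q => G q i) p (pdx k)) := fun i => by
      simp [dyi, pdx]
    simp [h1, h2]
  -- derivative of covd along S
  have hDcov : fderiv ℝ (covd G ωc k) p (Ssp G p)
      = fderiv ℝ (vfd (Ssp G) (ωc k)) p (Ssp G p)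
        - ∑ j, (vfd (Ssp G) (Nc G j k) p * ωc j p + Nc G j k p * vfd (Ssp G) (ωc j) p) := by
    have hck : covd G ωc k = fun q => vfd (Ssp G) (ωc k) q - ∑ j, Nc G j k q * ωc j q := rfl
    rw [hck, fd_sub dQ (DifferentiableAt.fun_sum fun j _ => (dN j k).fun_mul (dωc j)),
      fd_sum (fun j => (dN j k).fun_mul (dωc j))]
    exact congrArg _ (Finset.sum_congr rfl fun j _ => fd_mul (dN j k) (dωc j) _)
  -- RHS pieces
  have hB : vfd (Ssp G) (fun q => ωt k q + covd G ωc k q) p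
      = vfd (Ssp G) (ωt k) p + fderiv ℝ (covd G ωc k) p (Ssp G p) := by
    show fderiv ℝ (fun q => ωt k q + covd G ωc k q) p (Ssp G p) = _
    rw [fd_add (dωt k) (dcov k)]
    rfl
  have hCC : covd G (covd G ωc) k p
      = fderiv ℝ (covd G ωc k) p (Ssp G p)
        - ∑ j, Nc G j k p * (vfd (Ssp G) (ωc j) p - ∑ m, Nc G m j p * ωc m p) := by
    rfl
  have hR : ∀ j, Rjac G j k p
      = 2 * fderiv ℝ (fun q => G q j) p (pdx k) - (∑ m, Nc G j m p * Nc G m k p)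
        - vfd (Ssp G) (Nc G j k) p := fun j => rfl
  rw [hT1, hT2, hB, hCC, hDcov]
  have hswap : ∑ j, Nc G j k p * ∑ m, Nc G m j p * ωc m p
      = ∑ j, (∑ m, Nc G j m p * Nc G m k p) * ωc j p := by
    simp only [Finset.mul_sum, Finset.sum_mul]
    rw [Finset.sum_comm]
    exact Finset.sum_congr rfl fun j _ => Finset.sum_congr rfl fun m _ => by ring
  have hRsum : ∑ j, Rjac G j k p * ωc j p
      = ∑ j, (2 * fderiv ℝ (fun q => G q j) p (pdx k) * ωc j p)
        - ∑ j, ((∑ m, Nc G j m p * Nc G m k p) * ωc j p)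
        - ∑ j, (vfd (Ssp G) (Nc G j k) p * ωc j p) := by
    rw [← Finset.sum_sub_distrib, ← Finset.sum_sub_distrib]
    exact Finset.sum_congr rfl fun j _ => by rw [hR j]; ring
  have hmul2 : ∑ i, ωc i p * -(2 * fderiv ℝ (fun q => G q i) p (pdx k))
      = -∑ j, (2 * fderiv ℝ (fun q => G q j) p (pdx k) * ωc j p) := by
    rw [← Finset.sum_neg_distrib]
    exact Finset.sum_congr rfl fun i _ => by ring
  have hS3 : ∑ j, Nc G j k p * (vfd (Ssp G) (ωc j) p - ∑ m, Nc G m j p * ωc m p)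
      = ∑ j, Nc G j k p * vfd (Ssp G) (ωc j) p
        - ∑ j, ((∑ m, Nc G j m p * Nc G m k p) * ωc j p) := by
    rw [← hswap, ← Finset.sum_sub_distrib]
    exact Finset.sum_congr rfl fun j _ => by ring
  have hSi : ∑ i, (vfd (Ssp G) (ωc i) p * Nc G i k p + ωc i p * vfd (Ssp G) (Nc G i k) p)
      = ∑ j, Nc G j k p * vfd (Ssp G) (ωc j) p
        + ∑ j, (vfd (Ssp G) (Nc G j k) p * ωc j p) := by
    rw [← Finset.sum_add_distrib]
    exact Finset.sum_congr rfl fun i _ => by ring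
  have hS2 : ∑ j, (vfd (Ssp G) (Nc G j k) p * ωc j p + Nc G j k p * vfd (Ssp G) (ωc j) p)
      = ∑ j, (vfd (Ssp G) (Nc G j k) p * ωc j p)
        + ∑ j, Nc G j k p * vfd (Ssp G) (ωc j) p :=
    Finset.sum_add_distrib
  rw [hRsum, hmul2, hS3, hSi, hS2]
  ring

/-- decomposition of a vector in the adapted frame -/
lemma vec_decomp (G : E n → Fin n → ℝ) (p v : E n) :
    v = v.1 • Ssp G p + ((∑ k, (v.2.1 k - v.1 * p.2.2 k) • pdx k)
      + ∑ k, (v.2.2 k + v.1 * (2 * G p k)) • pdy k) := by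
  refine Prod.ext ?_ (Prod.ext ?_ ?_)
  · simp [Ssp, pdx, pdy, ypart, Prod.fst_sum]
  · funext j
    simp [Ssp, pdx, pdy, ypart, Prod.fst_sum, Prod.snd_sum, Finset.sum_apply,
      Pi.single_apply, mul_ite, Finset.sum_ite_eq']
    try ring
  · funext j
    simp [Ssp, pdx, pdy, ypart, Prod.fst_sum, Prod.snd_sum, Finset.sum_apply,
      Pi.single_apply, mul_ite, Finset.sum_ite_eq']
    try ring

end Stmt9Aux

/-- Let `ω = Σᵢ ω̃ᵢ δxⁱ + Σᵢ ωᵢ δyⁱ` be a 1-form on `E` (so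
`i_Sω = 0`).  Then `ω` is a dual symmetry of `S` (`L_Sω = 0`) if and only if
`ω̃ᵢ = −(∇ω)ᵢ` for all `i` and the Jacobi equation `(∇∇ω)ᵢ + Σⱼ Rʲᵢ ωⱼ = 0` holds. -/
theorem stmt9 (n : ℕ) (hn : 1 ≤ n) (G : E n → Fin n → ℝ) (hG : Cinf G)
    (ωt ωc : Fin n → E n → ℝ) (hωt : ∀ i, Cinf (ωt i)) (hωc : ∀ i, Cinf (ωc i)) :
    (∀ X : E n → E n, Cinf X → ∀ p : E n,
      lieD (Ssp G)
        (fun q w => (∑ i, ωt i q * dxi i q w) + ∑ i, ωc i q * dyi G i q w) X p = 0)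
    ↔ ((∀ (i : Fin n) (p : E n), ωt i p = -(covd G ωc i p))
       ∧ (∀ (i : Fin n) (p : E n),
          covd G (covd G ωc) i p + ∑ j, Rjac G j i p * ωc j p = 0)) := by
  constructor
  · intro h
    have hB : ∀ (k : Fin n) (p : E n), ωt k p + covd G ωc k p = 0 := by
      intro k p
      have h1 := h (fun _ => pdy k) contDiff_const p
      rw [lieD_eq hG hωt hωc contDiff_const p] at h1
      try simp only [] at h1
      rw [A_pdy hG hωt hωc k p] at h1
      exact h1
    refine ⟨fun k p => by have := hB k p; linarith, ?_⟩
    intro k p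
    have hBfun : (fun q => ωt k q + covd G ωc k q) = fun _ => (0:ℝ) :=
      funext fun q => hB k q
    have hv : vfd (Ssp G) (fun q => ωt k q + covd G ωc k q) p = 0 := by
      show fderiv ℝ (fun q => ωt k q + covd G ωc k q) p (Ssp G p) = 0
      rw [hBfun, fderiv_const_apply]
      rfl
    have h1 := h (fun _ => pdx k) contDiff_const p
    rw [lieD_eq hG hωt hωc contDiff_const p] at h1
    try simp only [] at h1
    rw [A_pdx hG hωt hωc k p, hv] at h1
    linarith
  · rintro ⟨h1, h2⟩ X hX p
    rw [lieD_eq hG hωt hωc hX p]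
    have hB : ∀ (k : Fin n) (q : E n), ωt k q + covd G ωc k q = 0 := fun k q => by
      rw [h1 k q]; ring
    set L : E n →L[ℝ] ℝ := fderiv ℝ (Th G ωt ωc) p (Ssp G p)
      + (Th G ωt ωc p).comp (fderiv ℝ (Ssp G) p) with hLdef
    have hLv : ∀ v : E n, L v = fderiv ℝ (Th G ωt ωc) p (Ssp G p) v
        + Th G ωt ωc p (fderiv ℝ (Ssp G) p v) := fun v => by
      rw [hLdef]; simp
    have hzS : L (Ssp G p) = 0 := (hLv _).trans (A_S hG hωt hωc p)
    have hzy : ∀ k, L (pdy k) = 0 := fun k =>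
      (hLv _).trans ((A_pdy hG hωt hωc k p).trans (hB k p))
    have hzx : ∀ k, L (pdx k) = 0 := fun k => by
      rw [hLv _, A_pdx hG hωt hωc k p]
      have hBfun : (fun q => ωt k q + covd G ωc k q) = fun _ => (0:ℝ) :=
        funext fun q => hB k q
      have hv : vfd (Ssp G) (fun q => ωt k q + covd G ωc k q) p = 0 := by
        show fderiv ℝ (fun q => ωt k q + covd G ωc k q) p (Ssp G p) = 0
        rw [hBfun, fderiv_const_apply]
        rfl
      rw [hv, h2 k p]
      ring
    rw [← hLv (X p), vec_decomp G p (X p)]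
    rw [map_add, map_add, map_smul, map_sum, map_sum]
    simp only [map_smul, smul_eq_mul, hzS, hzy, hzx, mul_zero,
      Finset.sum_const_zero, add_zero, zero_add]
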